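/- For a matroid M of rank r on E, the truncation flag matroid polytope decomposes as the signed Minkowski sum P_{F(M)} = Σ_{I⊆E} γ̃(M/I) Δ_{E−I}; equivalently, Σ_{i=1}^r P_{M_i} = Σ_{I⊆E} γ̃(M/I) Δ_{E−I}, where M_i is the rank-i truncation of M. -/

import Mathlib

open Finset
open scoped Pointwise Classical

/-- The 0/1 indicator vector of a finite set `B`. -/
def indic {α : Type*} [DecidableEq α] (B : Finset α) : α → ℝ :=
  fun a => if a ∈ B then 1 else 0

/-- The matroid polytope: convex hull of the indicator vectors of the bases. -/
def matroidPolytope {α : Type*} [DecidableEq α] (E : Finset α) (r : Finset α → ℕ) :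
    Set (α → ℝ) :=
  convexHull ℝ {x | ∃ B : Finset α, B ⊆ E ∧ B.card = r E ∧ r B = r E ∧ x = indic B}

/-- `Δ_J = conv{e_i : i ∈ J}`. -/
def simplexFace {α : Type*} [DecidableEq α] (J : Finset α) : Set (α → ℝ) :=
  convexHull ℝ {x | ∃ i ∈ J, x = Pi.single i (1 : ℝ)}

/-- The gamma invariant `γ(N) = ∑_I (−1)^{r(N)−|I|} C(r(N) − r_N(I) + 1, 2)`
(the sign `(−1)^{r(N)−|I|}` is written as `(−1)^{r(N)+|I|}`, which agrees). -/
def gammaInv {α : Type*} [DecidableEq α] (G : Finset α) (ρ : Finset α → ℕ) : ℤ :=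
  ∑ I ∈ G.powerset, (-1) ^ (ρ G + I.card) * (Nat.choose (ρ G - ρ I + 1) 2 : ℤ)

/-- The signed gamma invariant `γ̃(N) = (−1)^{r(N)} γ(N)`. -/
def gammaT {α : Type*} [DecidableEq α] (G : Finset α) (ρ : Finset α → ℕ) : ℤ :=
  (-1) ^ (ρ G) * gammaInv G ρ

/-- The rank function of the contraction `M/A`. -/
def contr {α : Type*} [DecidableEq α] (r : Finset α → ℕ) (A : Finset α) :
    Finset α → ℕ :=
  fun X => r (A ∪ X) - r A

set_option linter.unusedSectionVars false
set_option linter.unusedVariables false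
set_option maxHeartbeats 1000000

namespace TFS
variable {α : Type*} [DecidableEq α]

structure PolyM (f : Finset α → ℕ) : Prop where
  h0 : f ∅ = 0
  mono : ∀ ⦃A B : Finset α⦄, A ⊆ B → f A ≤ f B
  sub : ∀ A B : Finset α, f (A ∪ B) + f (A ∩ B) ≤ f A + f B
  le_card : ∀ A : Finset α, f A ≤ A.card

def pbases (f : Finset α → ℕ) (E : Finset α) : Finset (Finset α) :=
  E.powerset.filter (fun B => B.card = f E ∧ f B = f E)

lemma mem_pbases {f : Finset α → ℕ} {E B : Finset α} :
    B ∈ pbases f E ↔ B ⊆ E ∧ B.card = f E ∧ f B = f E := by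
  simp [pbases]

def pref (l : List α) (k : ℕ) : Finset α := (l.take k).toFinset

lemma pref_zero (l : List α) : pref l 0 = ∅ := by simp [pref]

lemma take_succ_eq (l : List α) {k : ℕ} (hk : k < l.length) :
    l.take (k+1) = l.take k ++ [l.get ⟨k, hk⟩] := by
  rw [List.take_succ]
  congr 1
  rw [List.getElem?_eq_getElem hk]
  rfl

lemma pref_succ (l : List α) {k : ℕ} (hk : k < l.length) :
    pref l (k+1) = insert (l.get ⟨k, hk⟩) (pref l k) := by
  rw [pref, take_succ_eq l hk, List.toFinset_append]
  ext x; simp [pref, or_comm]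

lemma pref_length (l : List α) : pref l l.length = l.toFinset := by
  simp [pref]

lemma get_not_mem_pref (l : List α) (hnd : l.Nodup) {k : ℕ} (hk : k < l.length) :
    l.get ⟨k, hk⟩ ∉ pref l k := by
  intro h
  rw [pref, List.mem_toFinset, List.mem_iff_get] at h
  obtain ⟨i, hi⟩ := h
  have hlen : (l.take k).length = min k l.length := l.length_take ..
  have hik : (i : ℕ) < k := by have := i.2; omega
  have hil : (i : ℕ) < l.length := by omega
  have : (l.take k).get i = l.get ⟨i, hil⟩ := by
    simp [List.get_eq_getElem, List.getElem_take]
  rw [this] at hi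
  have h2 := (List.Nodup.get_inj_iff hnd).mp hi
  have : (i : ℕ) = k := congrArg Fin.val h2
  omega

lemma f_insert_le {f : Finset α → ℕ} (hf : PolyM f) (C : Finset α) (a : α) :
    f (insert a C) ≤ f C + 1 := by
  have h := hf.sub C {a}
  have h2 : f {a} ≤ 1 := by simpa using hf.le_card {a}
  have h3 : insert a C = C ∪ {a} := by
    rw [Finset.union_comm]; exact Finset.insert_eq a C
  rw [h3]
  omega

def gstep (f : Finset α → ℕ) (C : Finset α) (a : α) : Finset α :=
  if f (insert a C) = f C + 1 then insert a C else C

def gr (f : Finset α → ℕ) (l : List α) (k : ℕ) : Finset α :=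
  (l.take k).foldl (gstep f) ∅

lemma gr_zero (f : Finset α → ℕ) (l : List α) : gr f l 0 = ∅ := by simp [gr]

lemma gr_succ (f : Finset α → ℕ) (l : List α) {k : ℕ} (hk : k < l.length) :
    gr f l (k+1) = gstep f (gr f l k) (l.get ⟨k, hk⟩) := by
  rw [gr, take_succ_eq l hk, List.foldl_append]
  rfl

lemma gr_inv {f : Finset α → ℕ} (hf : PolyM f) (l : List α) (hnd : l.Nodup) :
    ∀ k, k ≤ l.length →
      gr f l k ⊆ pref l k ∧ f (gr f l k) = (gr f l k).card ∧ (gr f l k).card = f (pref l k)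
  | 0, _ => by
      simp [gr_zero, pref_zero, hf.h0]
  | (k+1), hk1 => by
      have hk : k < l.length := hk1
      obtain ⟨hsub, hfc, hcf⟩ := gr_inv hf l hnd k (le_of_lt hk)
      set a := l.get ⟨k, hk⟩ with ha
      set C := gr f l k with hC
      set X := pref l k with hX
      have haX : a ∉ X := get_not_mem_pref l hnd hk
      have haC : a ∉ C := fun h => haX (hsub h)
      have hXY : X ∪ insert a C = insert a X := by
        ext x; simp only [Finset.mem_union, Finset.mem_insert]
        constructor
        · rintro (h | h | h) <;> [exact Or.inr h; exact Or.inl h; exact Or.inr (hsub h)]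
        · rintro (h | h)
          · exact Or.inr (Or.inl h)
          · exact Or.inl h
      have hXZ : X ∩ insert a C = C := by
        ext x; simp only [Finset.mem_inter, Finset.mem_insert]
        constructor
        · rintro ⟨hx, (rfl | hx')⟩
          · exact absurd hx haX
          · exact hx'
        · intro hx; exact ⟨hsub hx, Or.inr hx⟩
      have hprefsucc : pref l (k+1) = insert a X := pref_succ l hk
      have hgrsucc : gr f l (k+1) = gstep f C a := gr_succ f l hk
      have hfX1 : f (insert a X) ≤ f X + 1 := f_insert_le hf X a
      have hfX0 : f X ≤ f (insert a X) := hf.mono (Finset.subset_insert _ _)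
      by_cases hcase : f (insert a X) = f X + 1
      · -- rank jumps: greedy adds
        have hsubm := hf.sub X (insert a C)
        rw [hXY, hXZ] at hsubm
        have h1 : f (insert a C) ≤ f C + 1 := f_insert_le hf C a
        have h2 : f C + 1 ≤ f (insert a C) := by omega
        have hadd : f (insert a C) = f C + 1 := le_antisymm h1 h2
        have hstep : gstep f C a = insert a C := by simp [gstep, hadd]
        rw [hgrsucc, hstep, hprefsucc]
        refine ⟨Finset.insert_subset_insert a hsub, ?_, ?_⟩
        · rw [Finset.card_insert_of_notMem haC, hadd, hfc]
        · rw [Finset.card_insert_of_notMem haC, hcase]; omega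
      · -- rank stays: greedy doesn't add
        have hcase' : f (insert a X) = f X := by omega
        have h1 : f (insert a C) ≤ f (insert a X) :=
          hf.mono (Finset.insert_subset_insert a hsub)
        have h2 : f C ≤ f (insert a C) := hf.mono (Finset.subset_insert _ _)
        have h3 : f (insert a C) ≠ f C + 1 := by omega
        have hstep : gstep f C a = C := by simp [gstep, h3]
        rw [hgrsucc, hstep, hprefsucc]
        refine ⟨hsub.trans (Finset.subset_insert _ _), hfc, ?_⟩
        rw [hcase', ← hcf]

lemma gr_mem_pbases {f : Finset α → ℕ} (hf : PolyM f) (l : List α) (hnd : l.Nodup) :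
    gr f l l.length ∈ pbases f l.toFinset := by
  obtain ⟨h1, h2, h3⟩ := gr_inv hf l hnd l.length le_rfl
  rw [pref_length] at h1 h3
  exact mem_pbases.mpr ⟨h1, h3, by rw [h2, h3]⟩

lemma pbases_nonempty {f : Finset α → ℕ} (hf : PolyM f) (E : Finset α) :
    (pbases f E).Nonempty := by
  have h := gr_mem_pbases hf E.toList E.nodup_toList
  rw [Finset.toList_toFinset] at h
  exact ⟨_, h⟩

/-- the k-th largest weight (0 beyond the list) -/
def wt (w : α → ℝ) (l : List α) (k : ℕ) : ℝ := (l.map w).getD k 0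

lemma wt_eq (w : α → ℝ) (l : List α) {k : ℕ} (hk : k < l.length) :
    wt w l k = w (l.get ⟨k, hk⟩) := by
  rw [wt, List.getD_eq_getElem?_getD, List.getElem?_map, List.getElem?_eq_getElem hk]
  rfl

lemma wt_antitone (w : α → ℝ) (l : List α) (hs : l.Pairwise (fun a b => w b ≤ w a))
    {k : ℕ} (hk : k + 1 < l.length) : wt w l (k+1) ≤ wt w l k := by
  rw [wt_eq w l hk, wt_eq w l (by omega : k < l.length)]
  exact List.pairwise_iff_get.mp hs ⟨k, by omega⟩ ⟨k+1, hk⟩ (by simp)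

/-- Abel-summation comparison: if `u` is antitone and `D` is nonpositive with
`D 0 = D n = 0`, then `∑ u k (D (k+1) - D k) ≤ 0`. -/
lemma abel_nonpos (u D : ℕ → ℝ) (n : ℕ) (hu : ∀ k, k + 1 < n → u (k+1) ≤ u k)
    (hD0 : D 0 = 0) (hDn : D n = 0) (hD : ∀ j, j < n → D j ≤ 0) :
    ∑ k ∈ range n, u k * (D (k+1) - D k) ≤ 0 := by
  rcases n with _ | m
  · simp
  have e1 : ∑ k ∈ range (m+1), u k * (D (k+1) - D k)
      = ∑ k ∈ range (m+1), u k * D (k+1) - ∑ k ∈ range (m+1), u k * D k := by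
    rw [← Finset.sum_sub_distrib]; congr 1; ext k; ring
  have e2 : ∑ k ∈ range (m+1), u k * D k = ∑ k ∈ range m, u (k+1) * D (k+1) := by
    rw [Finset.sum_range_succ' (fun k => u k * D k) m, hD0]; simp
  have e3 : ∑ k ∈ range (m+1), u k * D (k+1)
      = ∑ k ∈ range m, u k * D (k+1) := by
    rw [Finset.sum_range_succ, hDn]; simp
  rw [e1, e2, e3, ← Finset.sum_sub_distrib]
  apply Finset.sum_nonpos
  intro k hk
  rw [Finset.mem_range] at hk
  have h1 : u (k+1) ≤ u k := hu k (by omega)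
  have h2 : D (k+1) ≤ 0 := hD (k+1) (by omega)
  nlinarith


lemma gr_sum {f : Finset α → ℕ} (hf : PolyM f) (w : α → ℝ) (l : List α) (hnd : l.Nodup) :
    ∀ k, k ≤ l.length →
      ∑ b ∈ gr f l k, w b
        = ∑ j ∈ range k, wt w l j * ((f (pref l (j+1)) : ℝ) - (f (pref l j) : ℝ))
  | 0, _ => by simp [gr_zero]
  | (k+1), hk1 => by
      have hk : k < l.length := hk1
      have ih := gr_sum hf w l hnd k (le_of_lt hk)
      obtain ⟨hsub, hfc, hcf⟩ := gr_inv hf l hnd k (le_of_lt hk)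
      obtain ⟨hsub', hfc', hcf'⟩ := gr_inv hf l hnd (k+1) hk1
      set a := l.get ⟨k, hk⟩ with ha
      set C := gr f l k with hC
      have haC : a ∉ C := fun h => get_not_mem_pref l hnd hk (hsub h)
      have hgrsucc : gr f l (k+1) = gstep f C a := gr_succ f l hk
      rw [Finset.sum_range_succ, ← ih]
      by_cases hcase : f (insert a C) = f C + 1
      · have hstep : gr f l (k+1) = insert a C := by rw [hgrsucc]; simp [gstep, hcase]
        have hcards : (gr f l (k+1)).card = C.card + 1 := by
          rw [hstep, Finset.card_insert_of_notMem haC]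
        have hdiff : (f (pref l (k+1)) : ℝ) - (f (pref l k) : ℝ) = 1 := by
          rw [← hcf', ← hcf, hcards]; push_cast; ring
        rw [hstep, Finset.sum_insert haC, hdiff, wt_eq w l hk, ← ha]
        ring
      · have hstep : gr f l (k+1) = C := by rw [hgrsucc]; simp [gstep, hcase]
        have hdiff : (f (pref l (k+1)) : ℝ) - (f (pref l k) : ℝ) = 0 := by
          rw [← hcf', ← hcf, hstep]; ring
        rw [hstep, hdiff]
        ring

lemma inter_card_le {f : Finset α → ℕ} (hf : PolyM f) {B : Finset α}
    (hB : f B = B.card) (X : Finset α) : (B ∩ X).card ≤ f X := by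
  have h := hf.sub (B ∩ X) (B \ X)
  have h1 : (B ∩ X) ∪ (B \ X) = B := by
    ext x; simp only [Finset.mem_union, Finset.mem_inter, Finset.mem_sdiff]; tauto
  have h2 : (B ∩ X) ∩ (B \ X) = ∅ := by
    ext x; simp only [Finset.mem_inter, Finset.mem_sdiff, Finset.notMem_empty]; tauto
  rw [h1, h2, hf.h0] at h
  have h3 : f (B \ X) ≤ (B \ X).card := hf.le_card _
  have h4 : (B ∩ X).card + (B \ X).card = B.card := Finset.card_inter_add_card_sdiff B X
  have h5 : (B ∩ X).card ≤ f (B ∩ X) := by omega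
  exact h5.trans (hf.mono (Finset.inter_subset_right))

lemma inter_sum (w : α → ℝ) (l : List α) (hnd : l.Nodup) (B : Finset α) :
    ∀ k, k ≤ l.length →
      ∑ b ∈ B ∩ pref l k, w b
        = ∑ j ∈ range k, wt w l j * (((B ∩ pref l (j+1)).card : ℝ) - ((B ∩ pref l j).card : ℝ))
  | 0, _ => by simp [pref_zero]
  | (k+1), hk1 => by
      have hk : k < l.length := hk1
      have ih := inter_sum w l hnd B k (le_of_lt hk)
      set a := l.get ⟨k, hk⟩ with ha
      have haP : a ∉ pref l k := get_not_mem_pref l hnd hk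
      have hps : pref l (k+1) = insert a (pref l k) := pref_succ l hk
      rw [Finset.sum_range_succ, ← ih]
      by_cases hab : a ∈ B
      · have hins : B ∩ pref l (k+1) = insert a (B ∩ pref l k) := by
          rw [hps]; ext x
          simp only [Finset.mem_inter, Finset.mem_insert]
          constructor
          · rintro ⟨hxB, (rfl | hx)⟩
            · exact Or.inl rfl
            · exact Or.inr ⟨hxB, hx⟩
          · rintro (rfl | ⟨hxB, hx⟩)
            · exact ⟨hab, Or.inl rfl⟩
            · exact ⟨hxB, Or.inr hx⟩
        have hanotin : a ∉ B ∩ pref l k := fun h => haP (Finset.mem_of_mem_inter_right h)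
        rw [hins, Finset.sum_insert hanotin, Finset.card_insert_of_notMem hanotin,
          wt_eq w l hk, ← ha]
        push_cast; ring
      · have hins : B ∩ pref l (k+1) = B ∩ pref l k := by
          rw [hps]; ext x
          simp only [Finset.mem_inter, Finset.mem_insert]
          constructor
          · rintro ⟨hxB, (rfl | hx)⟩
            · exact absurd hxB hab
            · exact ⟨hxB, hx⟩
          · rintro ⟨hxB, hx⟩; exact ⟨hxB, Or.inr hx⟩
        rw [hins]; ring

lemma sum_le_lov {f : Finset α → ℕ} (hf : PolyM f) (w : α → ℝ) (l : List α)
    (hnd : l.Nodup) (hs : l.Pairwise (fun a b => w b ≤ w a))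
    {B : Finset α} (hB : B ∈ pbases f l.toFinset) :
    ∑ b ∈ B, w b ≤ ∑ j ∈ range l.length, wt w l j * ((f (pref l (j+1)) : ℝ) - (f (pref l j) : ℝ)) := by
  obtain ⟨hBsub, hBcard, hBf⟩ := mem_pbases.mp hB
  have hBn : B ∩ pref l l.length = B := by
    rw [pref_length]; exact Finset.inter_eq_left.mpr hBsub
  have htel := inter_sum w l hnd B l.length le_rfl
  rw [hBn] at htel
  rw [htel]
  set D : ℕ → ℝ := fun j => ((B ∩ pref l j).card : ℝ) - (f (pref l j) : ℝ) with hD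
  have habel : ∑ k ∈ range l.length, wt w l k * (D (k+1) - D k) ≤ 0 := by
    apply abel_nonpos
    · intro k hk; exact wt_antitone w l hs hk
    · simp [hD, pref_zero, hf.h0]
    · have : B ∩ l.toFinset = B := Finset.inter_eq_left.mpr hBsub
      simp only [hD, pref_length, this, hBcard]
      ring
    · intro j hj
      simp only [hD, sub_nonpos]
      have hfB : f B = B.card := by rw [hBf, hBcard]
      exact_mod_cast inter_card_le hf hfB (pref l j)
  have key : ∑ k ∈ range l.length, wt w l k * (((B ∩ pref l (k+1)).card : ℝ) - ((B ∩ pref l k).card : ℝ))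
      - ∑ k ∈ range l.length, wt w l k * ((f (pref l (k+1)) : ℝ) - (f (pref l k) : ℝ))
      = ∑ k ∈ range l.length, wt w l k * (D (k+1) - D k) := by
    rw [← Finset.sum_sub_distrib]
    congr 1; ext k; simp only [hD]; ring
  linarith [habel, key.symm ▸ habel]

lemma greedy_main {f : Finset α → ℕ} (hf : PolyM f) (w : α → ℝ) (l : List α)
    (hnd : l.Nodup) (hs : l.Pairwise (fun a b => w b ≤ w a))
    (hne : (pbases f l.toFinset).Nonempty) :
    (pbases f l.toFinset).sup' hne (fun B => ∑ b ∈ B, w b)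
      = ∑ j ∈ range l.length, wt w l j * ((f (pref l (j+1)) : ℝ) - (f (pref l j) : ℝ)) := by
  apply le_antisymm
  · exact Finset.sup'_le hne _ (fun B hB => sum_le_lov hf w l hnd hs hB)
  · have hmem := gr_mem_pbases hf l hnd
    have := Finset.le_sup' (f := fun B => ∑ b ∈ B, w b) hmem
    rw [gr_sum hf w l hnd l.length le_rfl] at this
    exact this


lemma gamma_simp (E : Finset α) (r : Finset α → ℕ)
    (hmono : ∀ A B, A ⊆ B → r A ≤ r B) {I : Finset α} (hI : I ⊆ E) :
    gammaT (E \ I) (contr r I)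
      = ∑ J ∈ (E \ I).powerset, (-1) ^ J.card * ((r E - r (I ∪ J) + 1).choose 2 : ℤ) := by
  have hG : I ∪ (E \ I) = E := Finset.union_sdiff_of_subset hI
  unfold gammaT gammaInv contr
  rw [hG, Finset.mul_sum]
  apply Finset.sum_congr rfl
  intro J hJ
  have hrho : r E - r I - (r (I ∪ J) - r I) = r E - r (I ∪ J) :=
    Nat.sub_sub_sub_cancel_right (hmono I (I ∪ J) Finset.subset_union_left)
  rw [hrho, pow_add, ← mul_assoc, ← mul_assoc, ← mul_pow]
  norm_num

lemma inner_eval (E K A : Finset α) (hK : K ⊆ E) (hA : A ⊆ E) :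
    ∑ J ∈ K.powerset.filter (fun J => ¬ (K \ J = E)),
        (-1 : ℤ) ^ J.card * ((min 1 ((A \ (K \ J)).card) : ℕ) : ℤ)
      = (if K = ∅ then 1 else 0) - (if K = A then 1 else 0) := by
  have hfull : ∑ J ∈ K.powerset.filter (fun J => ¬ (K \ J = E)),
        (-1 : ℤ) ^ J.card * ((min 1 ((A \ (K \ J)).card) : ℕ) : ℤ)
      = ∑ J ∈ K.powerset, (-1 : ℤ) ^ J.card * ((min 1 ((A \ (K \ J)).card) : ℕ) : ℤ) := by
    apply Finset.sum_subset (Finset.filter_subset _ _)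
    intro J hJ hJ'
    have hKJ : K \ J = E := by
      by_contra h
      exact hJ' (Finset.mem_filter.mpr ⟨hJ, h⟩)
    have : A \ (K \ J) = ∅ := by
      rw [hKJ]; exact Finset.sdiff_eq_empty_iff_subset.mpr hA
    simp [this]
  rw [hfull]
  have hterm : ∀ J : Finset α, (((min 1 ((A \ (K \ J)).card) : ℕ) : ℤ))
      = 1 - (if A ⊆ K \ J then 1 else 0) := by
    intro J
    by_cases h : A ⊆ K \ J
    · rw [Finset.sdiff_eq_empty_iff_subset.mpr h]; simp [h]
    · have : (A \ (K \ J)).Nonempty := by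
        rw [← Finset.sdiff_eq_empty_iff_subset] at h
        exact Finset.nonempty_iff_ne_empty.mpr h
      have hc : 1 ≤ (A \ (K \ J)).card := Finset.card_pos.mpr this
      have hm : min 1 ((A \ (K \ J)).card) = 1 := by omega
      rw [hm, if_neg h]
      simp
  have hsplit : ∑ J ∈ K.powerset, (-1 : ℤ) ^ J.card * ((min 1 ((A \ (K \ J)).card) : ℕ) : ℤ)
      = (∑ J ∈ K.powerset, (-1 : ℤ) ^ J.card)
        - ∑ J ∈ K.powerset, (if A ⊆ K \ J then (-1 : ℤ) ^ J.card else 0) := by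
    rw [← Finset.sum_sub_distrib]
    apply Finset.sum_congr rfl
    intro J _
    rw [hterm J, mul_sub, mul_one, mul_ite, mul_one, mul_zero]
  rw [hsplit, Finset.sum_powerset_neg_one_pow_card]
  congr 1
  rw [← Finset.sum_filter]
  have hfilt : K.powerset.filter (fun J => A ⊆ K \ J)
      = if A ⊆ K then (K \ A).powerset else ∅ := by
    by_cases hAK : A ⊆ K
    · rw [if_pos hAK]
      ext J
      simp only [Finset.mem_filter, Finset.mem_powerset]
      constructor
      · rintro ⟨hJK, hAKJ⟩
        intro x hx
        have hxK := hJK hx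
        refine Finset.mem_sdiff.mpr ⟨hxK, fun hxA => ?_⟩
        exact (Finset.mem_sdiff.mp (hAKJ hxA)).2 hx
      · intro hJKA
        constructor
        · exact hJKA.trans (Finset.sdiff_subset)
        · intro x hx
          refine Finset.mem_sdiff.mpr ⟨hAK hx, fun hxJ => ?_⟩
          exact (Finset.mem_sdiff.mp (hJKA hxJ)).2 hx
    · rw [if_neg hAK]
      ext J
      simp only [Finset.mem_filter, Finset.mem_powerset, Finset.notMem_empty, iff_false,
        not_and]
      intro hJK hAKJ
      exact hAK (hAKJ.trans (Finset.sdiff_subset))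
  rw [hfilt]
  by_cases hAK : A ⊆ K
  · rw [if_pos hAK, Finset.sum_powerset_neg_one_pow_card]
    by_cases hKA : K = A
    · subst hKA; simp
    · have : ¬ (K \ A = ∅) := by
        intro h
        exact hKA (Finset.Subset.antisymm (Finset.sdiff_eq_empty_iff_subset.mp h) hAK)
      rw [if_neg this, if_neg hKA]
  · have hKA : ¬ (K = A) := fun h => hAK (h ▸ Finset.Subset.refl _)
    rw [if_neg hAK, if_neg hKA]
    simp

lemma sum_min (s a : ℕ) :
    (∑ i ∈ Finset.Icc 1 s, ((min i a : ℕ) : ℤ))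
      = ((s + 1).choose 2 : ℤ) - ((s - a + 1).choose 2 : ℤ) := by
  induction s with
  | zero => simp [Nat.zero_sub]
  | succ s ih =>
    rw [Finset.sum_Icc_succ_top (by omega : 1 ≤ s + 1), ih]
    have hc2 : (s + 2).choose 2 = (s + 1) + (s + 1).choose 2 := by
      rw [show s + 2 = (s+1)+1 from rfl, Nat.choose_succ_succ, Nat.choose_one_right]
    by_cases h : a ≤ s
    · have h1 : s + 1 - a = (s - a) + 1 := by omega
      have h2 : min (s + 1) a = a := by omega
      have hc3 : (s - a + 2).choose 2 = (s - a + 1) + (s - a + 1).choose 2 := by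
        rw [show s - a + 2 = (s - a + 1) + 1 from rfl, Nat.choose_succ_succ,
          Nat.choose_one_right]
      rw [h1, h2]
      rw [show s - a + 1 + 1 = s - a + 2 from rfl, hc2, hc3]
      have hsa : ((s - a : ℕ) : ℤ) = (s : ℤ) - (a : ℤ) := by
        rw [Nat.cast_sub h]
      push_cast
      rw [hsa]
      ring
    · have h1 : s + 1 - a = 0 := by omega
      have h1' : s - a = 0 := by omega
      have h2 : min (s + 1) a = s + 1 := by omega
      rw [h1, h1', h2, hc2]
      push_cast
      ring

lemma claimB (E : Finset α) (r : Finset α → ℕ)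
    (hcard : ∀ A, r A ≤ A.card)
    (hmono : ∀ A B, A ⊆ B → r A ≤ r B)
    {A : Finset α} (hA : A ⊆ E) :
    ∑ I ∈ E.powerset.filter (fun I => ¬ I = E),
        gammaT (E \ I) (contr r I) * ((min 1 ((A \ I).card) : ℕ) : ℤ)
      = ((r E + 1).choose 2 : ℤ) - ((r E - r A + 1).choose 2 : ℤ) := by
  have hr0 : r ∅ = 0 := Nat.le_zero.mp (by simpa using hcard ∅)
  -- rewrite gammaT
  have step1 : ∑ I ∈ E.powerset.filter (fun I => ¬ I = E),
        gammaT (E \ I) (contr r I) * ((min 1 ((A \ I).card) : ℕ) : ℤ)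
      = ∑ I ∈ E.powerset.filter (fun I => ¬ I = E),
          ∑ J ∈ (E \ I).powerset,
            (-1 : ℤ) ^ J.card * ((r E - r (I ∪ J) + 1).choose 2 : ℤ)
              * ((min 1 ((A \ I).card) : ℕ) : ℤ) := by
    apply Finset.sum_congr rfl
    intro I hI
    rw [Finset.mem_filter, Finset.mem_powerset] at hI
    rw [gamma_simp E r hmono hI.1, Finset.sum_mul]
  rw [step1]
  rw [Finset.sum_sigma' (E.powerset.filter (fun I => ¬ I = E)) (fun I => (E \ I).powerset)
    (fun I J => (-1 : ℤ) ^ J.card * ((r E - r (I ∪ J) + 1).choose 2 : ℤ)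
      * ((min 1 ((A \ I).card) : ℕ) : ℤ))]
  have step2 : ∑ p ∈ ((E.powerset.filter (fun I => ¬ I = E)).sigma
        (fun I => (E \ I).powerset)),
        (-1 : ℤ) ^ p.2.card * ((r E - r (p.1 ∪ p.2) + 1).choose 2 : ℤ)
          * ((min 1 ((A \ p.1).card) : ℕ) : ℤ)
      = ∑ p ∈ (E.powerset.sigma
          (fun K => K.powerset.filter (fun J => ¬ (K \ J = E)))),
          (-1 : ℤ) ^ p.2.card * ((r E - r p.1 + 1).choose 2 : ℤ)
            * ((min 1 ((A \ (p.1 \ p.2)).card) : ℕ) : ℤ) := by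
    apply Finset.sum_nbij' (fun p => (⟨p.1 ∪ p.2, p.2⟩ : Σ _ : Finset α, Finset α))
      (fun p => (⟨p.1 \ p.2, p.2⟩ : Σ _ : Finset α, Finset α))
    · rintro ⟨I, J⟩ hp
      rw [Finset.mem_sigma, Finset.mem_filter, Finset.mem_powerset, Finset.mem_powerset] at hp
      obtain ⟨⟨hIE, hIne⟩, hJ⟩ := hp
      rw [Finset.mem_sigma, Finset.mem_powerset, Finset.mem_filter, Finset.mem_powerset]
      have hdisj : ∀ x ∈ J, x ∉ I := fun x hx => (Finset.mem_sdiff.mp (hJ hx)).2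
      have hIJ : (I ∪ J) \ J = I := by
        ext x
        simp only [Finset.mem_sdiff, Finset.mem_union]
        constructor
        · rintro ⟨(h | h), hn⟩
          · exact h
          · exact absurd h hn
        · intro hx
          exact ⟨Or.inl hx, fun hxJ => hdisj x hxJ hx⟩
      refine ⟨Finset.union_subset hIE (hJ.trans Finset.sdiff_subset), Finset.subset_union_right, ?_⟩
      rw [hIJ]; exact hIne
    · rintro ⟨K, J⟩ hp
      rw [Finset.mem_sigma, Finset.mem_powerset, Finset.mem_filter, Finset.mem_powerset] at hp
      obtain ⟨hKE, hJK, hne⟩ := hp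
      rw [Finset.mem_sigma, Finset.mem_filter, Finset.mem_powerset, Finset.mem_powerset]
      refine ⟨⟨Finset.sdiff_subset.trans hKE, hne⟩, ?_⟩
      intro x hx
      exact Finset.mem_sdiff.mpr ⟨hKE (hJK hx), fun h => (Finset.mem_sdiff.mp h).2 hx⟩
    · rintro ⟨I, J⟩ hp
      rw [Finset.mem_sigma, Finset.mem_filter, Finset.mem_powerset, Finset.mem_powerset] at hp
      obtain ⟨⟨hIE, hIne⟩, hJ⟩ := hp
      have hdisj : ∀ x ∈ J, x ∉ I := fun x hx => (Finset.mem_sdiff.mp (hJ hx)).2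
      have hIJ : (I ∪ J) \ J = I := by
        ext x
        simp only [Finset.mem_sdiff, Finset.mem_union]
        constructor
        · rintro ⟨(h | h), hn⟩
          · exact h
          · exact absurd h hn
        · intro hx
          exact ⟨Or.inl hx, fun hxJ => hdisj x hxJ hx⟩
      simp only [hIJ]
    · rintro ⟨K, J⟩ hp
      rw [Finset.mem_sigma, Finset.mem_powerset, Finset.mem_filter, Finset.mem_powerset] at hp
      obtain ⟨hKE, hJK, hne⟩ := hp
      have : (K \ J) ∪ J = K := by
        ext x
        simp only [Finset.mem_union, Finset.mem_sdiff]
        constructor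
        · rintro (⟨h, _⟩ | h)
          · exact h
          · exact hJK h
        · intro hx
          by_cases hxJ : x ∈ J
          · exact Or.inr hxJ
          · exact Or.inl ⟨hx, hxJ⟩
      simp only [this]
    · rintro ⟨I, J⟩ hp
      rw [Finset.mem_sigma, Finset.mem_filter, Finset.mem_powerset, Finset.mem_powerset] at hp
      obtain ⟨⟨hIE, hIne⟩, hJ⟩ := hp
      have hdisj : ∀ x ∈ J, x ∉ I := fun x hx => (Finset.mem_sdiff.mp (hJ hx)).2
      have hIJ : (I ∪ J) \ J = I := by
        ext x
        simp only [Finset.mem_sdiff, Finset.mem_union]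
        constructor
        · rintro ⟨(h | h), hn⟩
          · exact h
          · exact absurd h hn
        · intro hx
          exact ⟨Or.inl hx, fun hxJ => hdisj x hxJ hx⟩
      simp only [hIJ]
  rw [step2, Finset.sum_sigma]
  have step3 : ∀ K ∈ E.powerset,
      ∑ J ∈ K.powerset.filter (fun J => ¬ (K \ J = E)),
          (-1 : ℤ) ^ J.card * ((r E - r K + 1).choose 2 : ℤ)
            * ((min 1 ((A \ (K \ J)).card) : ℕ) : ℤ)
        = ((r E - r K + 1).choose 2 : ℤ)
            * ((if K = ∅ then 1 else 0) - (if K = A then 1 else 0)) := by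
    intro K hK
    rw [Finset.mem_powerset] at hK
    rw [← inner_eval E K A hK hA, Finset.mul_sum]
    apply Finset.sum_congr rfl
    intro J _
    ring
  rw [Finset.sum_congr rfl step3]
  have expand : ∑ K ∈ E.powerset, ((r E - r K + 1).choose 2 : ℤ)
        * ((if K = ∅ then 1 else 0) - (if K = A then 1 else 0))
      = (∑ K ∈ E.powerset, (if K = ∅ then ((r E - r K + 1).choose 2 : ℤ) else 0))
        - ∑ K ∈ E.powerset, (if K = A then ((r E - r K + 1).choose 2 : ℤ) else 0) := by
    rw [← Finset.sum_sub_distrib]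
    apply Finset.sum_congr rfl
    intro K _
    rw [mul_sub, mul_ite, mul_one, mul_zero, mul_ite, mul_one, mul_zero]
  rw [expand, Finset.sum_ite_eq' E.powerset ∅, Finset.sum_ite_eq' E.powerset A,
    if_pos (Finset.empty_mem_powerset E), if_pos (Finset.mem_powerset.mpr hA), hr0,
    Nat.sub_zero]


abbrev V (α : Type*) := α → ℝ

noncomputable def mymax (f : V α → ℝ) (P : Finset (V α)) : ℝ :=
  if h : P.Nonempty then P.sup' h f else 0

lemma mymax_of_nonempty {f : V α → ℝ} {P : Finset (V α)} (h : P.Nonempty) :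
    mymax f P = P.sup' h f := dif_pos h

lemma mymax_zero (f : V α →L[ℝ] ℝ) : mymax f (0 : Finset (V α)) = 0 := by
  have h0 : (0 : Finset (V α)) = {0} := rfl
  have hne : (0 : Finset (V α)).Nonempty := ⟨0, by simp [h0]⟩
  rw [mymax_of_nonempty hne]
  apply le_antisymm
  · apply Finset.sup'_le
    intro x hx
    rw [h0, Finset.mem_singleton] at hx
    simp [hx]
  · have : (0 : V α) ∈ (0 : Finset (V α)) := by simp [h0]
    have := Finset.le_sup' (f : V α → ℝ) this
    simpa using this

lemma mymax_add (f : V α →L[ℝ] ℝ) {P Q : Finset (V α)} (hP : P.Nonempty) (hQ : Q.Nonempty) :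
    mymax f (P + Q) = mymax f P + mymax f Q := by
  have hPQ : (P + Q).Nonempty := hP.add hQ
  rw [mymax_of_nonempty hPQ, mymax_of_nonempty hP, mymax_of_nonempty hQ]
  apply le_antisymm
  · apply Finset.sup'_le
    intro x hx
    obtain ⟨p, hp, q, hq, rfl⟩ := Finset.mem_add.mp hx
    rw [map_add]
    exact add_le_add (Finset.le_sup' f hp) (Finset.le_sup' f hq)
  · obtain ⟨p, hp, hpe⟩ := Finset.exists_mem_eq_sup' hP f
    obtain ⟨q, hq, hqe⟩ := Finset.exists_mem_eq_sup' hQ f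
    rw [hpe, hqe, ← map_add]
    exact Finset.le_sup' f (Finset.add_mem_add hp hq)

lemma nonempty_finsetSum {ι : Type*} (s : Finset ι) (P : ι → Finset (V α))
    (h : ∀ i ∈ s, (P i).Nonempty) : (∑ i ∈ s, P i).Nonempty := by
  classical
  induction s using Finset.cons_induction with
  | empty => exact ⟨0, by simp⟩
  | cons a s ha ih =>
    rw [Finset.sum_cons]
    exact (h a (Finset.mem_cons_self a s)).add (ih (fun i hi => h i (Finset.mem_cons.mpr (Or.inr hi))))

lemma mymax_finsetSum {ι : Type*} (f : V α →L[ℝ] ℝ) (s : Finset ι) (P : ι → Finset (V α))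
    (h : ∀ i ∈ s, (P i).Nonempty) :
    mymax f (∑ i ∈ s, P i) = ∑ i ∈ s, mymax f (P i) := by
  classical
  induction s using Finset.cons_induction with
  | empty => simpa using mymax_zero f
  | cons a s ha ih =>
    rw [Finset.sum_cons, Finset.sum_cons,
      mymax_add f (h a (Finset.mem_cons_self a s))
        (nonempty_finsetSum s P (fun i hi => h i (Finset.mem_cons.mpr (Or.inr hi)))),
      ih (fun i hi => h i (Finset.mem_cons.mpr (Or.inr hi)))]

lemma hull_finsetSum {ι : Type*} (s : Finset ι) (P : ι → Finset (V α)) :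
    ∑ i ∈ s, convexHull ℝ (↑(P i) : Set (V α)) = convexHull ℝ (↑(∑ i ∈ s, P i) : Set (V α)) := by
  classical
  induction s using Finset.cons_induction with
  | empty =>
    simp only [Finset.sum_empty]
    rw [Finset.coe_zero]
    have h0 : (0 : Set (V α)) = {0} := rfl
    rw [h0, convexHull_singleton, ← h0]
  | cons a s ha ih =>
    rw [Finset.sum_cons, Finset.sum_cons, ih, Finset.coe_add, convexHull_add]

lemma hull_subset_of_mymax_le {P Q : Finset (V α)} (hQ : Q.Nonempty)
    (h : ∀ f : V α →L[ℝ] ℝ, mymax f P ≤ mymax f Q) :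
    convexHull ℝ (↑P : Set (V α)) ⊆ convexHull ℝ (↑Q : Set (V α)) := by
  apply convexHull_min _ (convex_convexHull ℝ _)
  intro p hp
  by_contra hpc
  have hconv : Convex ℝ (convexHull ℝ (↑Q : Set (V α))) := convex_convexHull ℝ _
  have hclosed : IsClosed (convexHull ℝ (↑Q : Set (V α))) :=
    (Q.finite_toSet.isCompact_convexHull ℝ).isClosed
  obtain ⟨f, u, hfu, hup⟩ := geometric_hahn_banach_closed_point hconv hclosed hpc
  have h1 : mymax f Q < u := by
    rw [mymax_of_nonempty hQ]
    obtain ⟨q, hq, hqe⟩ := Finset.exists_mem_eq_sup' hQ f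
    rw [hqe]
    exact hfu q (subset_convexHull ℝ _ hq)
  have h2 : u < mymax f P := by
    have hPne : P.Nonempty := ⟨p, hp⟩
    rw [mymax_of_nonempty hPne]
    exact lt_of_lt_of_le hup (Finset.le_sup' f hp)
  linarith [h1, h2, h f]
  
lemma hull_eq_of_mymax_eq {P Q : Finset (V α)} (hP : P.Nonempty) (hQ : Q.Nonempty)
    (h : ∀ f : V α →L[ℝ] ℝ, mymax f P = mymax f Q) :
    convexHull ℝ (↑P : Set (V α)) = convexHull ℝ (↑Q : Set (V α)) :=
  Set.Subset.antisymm
    (hull_subset_of_mymax_le hQ (fun f => le_of_eq (h f)))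
    (hull_subset_of_mymax_le hP (fun f => le_of_eq (h f).symm))



lemma polyM_trunc (r : Finset α → ℕ)
    (hcard : ∀ A, r A ≤ A.card)
    (hmono : ∀ A B, A ⊆ B → r A ≤ r B)
    (hsub : ∀ A B, r (A ∪ B) + r (A ∩ B) ≤ r A + r B)
    (i : ℕ) : PolyM (fun A => min i (r A)) := by
  have hr0 : r ∅ = 0 := Nat.le_zero.mp (by simpa using hcard ∅)
  refine ⟨by simp [hr0], ?_, ?_, ?_⟩
  · intro A B hAB
    have := hmono A B hAB
    omega
  · intro A B
    have h1 := hsub A B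
    have h2 := hmono A (A ∪ B) Finset.subset_union_left
    have h3 := hmono B (A ∪ B) Finset.subset_union_right
    have h4 := hmono (A ∩ B) A Finset.inter_subset_left
    have h5 := hmono (A ∩ B) B Finset.inter_subset_right
    omega
  · intro A
    have := hcard A
    omega

lemma polyM_g (I : Finset α) : PolyM (fun A => min 1 ((A \ I).card)) := by
  refine ⟨by simp, ?_, ?_, ?_⟩
  · intro A B hAB
    have : (A \ I).card ≤ (B \ I).card :=
      Finset.card_le_card (Finset.sdiff_subset_sdiff hAB (Finset.Subset.refl I))
    omega
  · intro A B
    have h1 : ((A ∪ B) \ I) = (A \ I) ∪ (B \ I) := by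
      ext x; simp only [Finset.mem_sdiff, Finset.mem_union]; tauto
    have h2 : ((A ∪ B) \ I).card ≤ (A \ I).card + (B \ I).card := by
      rw [h1]; exact Finset.card_union_le _ _
    have h3 : ((A ∩ B) \ I).card ≤ (A \ I).card :=
      Finset.card_le_card (Finset.sdiff_subset_sdiff Finset.inter_subset_left (Finset.Subset.refl I))
    have h4 : ((A ∩ B) \ I).card ≤ (B \ I).card :=
      Finset.card_le_card (Finset.sdiff_subset_sdiff Finset.inter_subset_right (Finset.Subset.refl I))
    omega
  · intro A
    have : (A \ I).card ≤ A.card := Finset.card_le_card Finset.sdiff_subset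
    omega

lemma pbases_g {E I : Finset α} (hI : I ⊆ E) (hne : ¬ I = E) :
    pbases (fun A => min 1 ((A \ I).card)) E = (E \ I).image (fun j => ({j} : Finset α)) := by
  have hEI : (E \ I).Nonempty := Finset.sdiff_nonempty.mpr
    (fun h => hne (Finset.Subset.antisymm hI h))
  have hgE : min 1 ((E \ I).card) = 1 := by
    have := Finset.card_pos.mpr hEI
    omega
  ext B
  rw [mem_pbases, Finset.mem_image]
  simp only [hgE]
  constructor
  · rintro ⟨hBE, hB1, hBg⟩
    obtain ⟨j, rfl⟩ := Finset.card_eq_one.mp hB1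
    refine ⟨j, ?_, rfl⟩
    have hjI : j ∉ I := by
      intro hj
      have : ({j} : Finset α) \ I = ∅ := by
        ext x; simp only [Finset.mem_sdiff, Finset.mem_singleton, Finset.notMem_empty,
          iff_false, not_and, not_not]
        rintro rfl; exact hj
      rw [this] at hBg
      simp at hBg
    exact Finset.mem_sdiff.mpr ⟨hBE (Finset.mem_singleton_self j), hjI⟩
  · rintro ⟨j, hj, rfl⟩
    obtain ⟨hjE, hjI⟩ := Finset.mem_sdiff.mp hj
    have hsd : ({j} : Finset α) \ I = {j} := by
      ext x; simp only [Finset.mem_sdiff, Finset.mem_singleton]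
      constructor
      · rintro ⟨h, _⟩; exact h
      · rintro rfl; exact ⟨rfl, hjI⟩
    refine ⟨Finset.singleton_subset_iff.mpr hjE, by simp, by rw [hsd]; simp⟩

lemma indic_eq_sum (B : Finset α) : indic B = ∑ b ∈ B, Pi.single b (1 : ℝ) := by
  funext a
  rw [indic, Finset.sum_apply]
  simp only [Pi.single_apply]
  rw [Finset.sum_ite_eq B a (fun _ => (1:ℝ))]

lemma f_indic (f : V α →L[ℝ] ℝ) (B : Finset α) :
    f (indic B) = ∑ b ∈ B, f (Pi.single b (1 : ℝ)) := by
  rw [indic_eq_sum, map_sum]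



lemma exists_sorted (E : Finset α) (w : α → ℝ) :
    ∃ l : List α, l.Nodup ∧ l.toFinset = E ∧ l.Pairwise (fun a b => w b ≤ w a) := by
  classical
  set le : α → α → Bool := fun a b => decide (w b ≤ w a) with hle
  have hperm := E.toList.mergeSort_perm le
  refine ⟨E.toList.mergeSort le, ?_, ?_, ?_⟩
  · exact hperm.symm.nodup E.nodup_toList
  · exact (List.toFinset_eq_of_perm _ _ hperm).trans (Finset.toList_toFinset E)
  · have htrans : ∀ a b c : α, le a b = true → le b c = true → le a c = true := by
      intro a b c hab hbc
      simp only [hle, decide_eq_true_eq] at *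
      linarith
    have htot : ∀ a b : α, (le a b || le b a) = true := by
      intro a b
      simp only [hle, Bool.or_eq_true, decide_eq_true_eq]
      exact le_total (w b) (w a)
    have hs := List.pairwise_mergeSort htrans htot E.toList
    exact hs.imp (fun h => by simpa [hle, decide_eq_true_eq] using h)

lemma mymax_smul (f : V α →L[ℝ] ℝ) {c : ℝ} (hc : 0 ≤ c) {T : Finset (V α)}
    (hT : T.Nonempty) : mymax f (c • T) = c * mymax f T := by
  have hTc : (c • T).Nonempty := hT.smul_finset (a := c)
  rw [mymax_of_nonempty hTc, mymax_of_nonempty hT]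
  have himg : c • T = T.image (fun x => c • x) := Finset.smul_finset_def
  have h1 : (c • T).sup' hTc f = T.sup' hT (⇑f ∘ (fun x => c • x)) := by
    rw [Finset.sup'_congr hTc himg (fun x _ => rfl)]
    exact Finset.sup'_image _ _
  rw [h1]
  have h2 : T.sup' hT (⇑f ∘ (fun x => c • x)) = T.sup' hT (fun x => c * f x) := by
    apply Finset.sup'_congr hT rfl
    intro x _
    simp [map_smul, smul_eq_mul]
  rw [h2]
  exact (Finset.comp_sup'_eq_sup'_comp hT (fun x => c * x)
    (fun x y => mul_max_of_nonneg x y hc)).symm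

lemma PhiPsi (E : Finset α) (r : Finset α → ℕ)
    (hcard : ∀ A, r A ≤ A.card)
    (hmono : ∀ A B, A ⊆ B → r A ≤ r B)
    {A : Finset α} (hA : A ⊆ E) :
    ∑ i ∈ Finset.Icc 1 (r E), ((min i (r A) : ℕ) : ℝ)
      = ∑ I ∈ E.powerset.filter (fun I => ¬ I = E),
          ((gammaT (E \ I) (contr r I) : ℤ) : ℝ) * ((min 1 ((A \ I).card) : ℕ) : ℝ) := by
  have h3 : (∑ i ∈ Finset.Icc 1 (r E), ((min i (r A) : ℕ) : ℤ))
      = ∑ I ∈ E.powerset.filter (fun I => ¬ I = E),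
          gammaT (E \ I) (contr r I) * ((min 1 ((A \ I).card) : ℕ) : ℤ) :=
    (sum_min (r E) (r A)).trans (claimB E r hcard hmono hA).symm
  have := congrArg (fun z : ℤ => (z : ℝ)) h3
  push_cast at this ⊢
  convert this using 2

/-- The "Lovász"-type support value of a polymatroid along a sorted list. -/
noncomputable def lov (w : α → ℝ) (l : List α) (f0 : Finset α → ℕ) : ℝ :=
  ∑ j ∈ Finset.range l.length,
    wt w l j * ((f0 (pref l (j+1)) : ℝ) - (f0 (pref l j) : ℝ))

lemma greedy_lov {f : Finset α → ℕ} (hf : PolyM f) (w : α → ℝ) (l : List α)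
    (hnd : l.Nodup) (hs : l.Pairwise (fun a b => w b ≤ w a))
    (hne : (pbases f l.toFinset).Nonempty) :
    (pbases f l.toFinset).sup' hne (fun B => ∑ b ∈ B, w b) = lov w l f :=
  greedy_main hf w l hnd hs hne

noncomputable def Vset (r : Finset α → ℕ) (E : Finset α) (i : ℕ) : Finset (V α) :=
  (pbases (fun A => min i (r A)) E).image indic

noncomputable def Tset (E I : Finset α) : Finset (V α) :=
  (E \ I).image (fun j => Pi.single j (1 : ℝ))

lemma Vset_nonempty (r : Finset α → ℕ)
    (hcard : ∀ A, r A ≤ A.card)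
    (hmono : ∀ A B, A ⊆ B → r A ≤ r B)
    (hsub : ∀ A B, r (A ∪ B) + r (A ∩ B) ≤ r A + r B)
    (E : Finset α) (i : ℕ) : (Vset r E i).Nonempty :=
  (pbases_nonempty (polyM_trunc r hcard hmono hsub i) E).image indic

lemma Tset_nonempty {E I : Finset α} (hIE : I ⊆ E) (hne : I ≠ E) :
    (Tset E I).Nonempty := by
  have hEI : (E \ I).Nonempty := Finset.sdiff_nonempty.mpr
    (fun h => hne (Finset.Subset.antisymm hIE h))
  exact hEI.image _

lemma mymax_Vset (r : Finset α → ℕ)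
    (hcard : ∀ A, r A ≤ A.card)
    (hmono : ∀ A B, A ⊆ B → r A ≤ r B)
    (hsub : ∀ A B, r (A ∪ B) + r (A ∩ B) ≤ r A + r B)
    (i : ℕ) (f : V α →L[ℝ] ℝ) (l : List α) (hnd : l.Nodup)
    (hsort : l.Pairwise (fun a b => f (Pi.single b (1:ℝ)) ≤ f (Pi.single a (1:ℝ)))) :
    mymax f (Vset r l.toFinset i)
      = lov (fun a => f (Pi.single a (1:ℝ))) l (fun A => min i (r A)) := by
  have hfi : PolyM (fun A => min i (r A)) := polyM_trunc r hcard hmono hsub i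
  have hne1 : (pbases (fun A => min i (r A)) l.toFinset).Nonempty :=
    pbases_nonempty hfi _
  rw [Vset, mymax_of_nonempty (hne1.image indic)]
  rw [Finset.sup'_image (hne1.image indic) (⇑f)]
  exact (Finset.sup'_congr hne1 rfl (fun B _ => f_indic f B)).trans
    (greedy_lov hfi _ l hnd hsort hne1)

lemma mymax_Tset (f : V α →L[ℝ] ℝ) (l : List α) (hnd : l.Nodup)
    (hsort : l.Pairwise (fun a b => f (Pi.single b (1:ℝ)) ≤ f (Pi.single a (1:ℝ))))
    {I : Finset α} (hIE : I ⊆ l.toFinset) (hne : I ≠ l.toFinset) :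
    mymax f (Tset l.toFinset I)
      = lov (fun a => f (Pi.single a (1:ℝ))) l (fun A => min 1 ((A \ I).card)) := by
  have hg : PolyM (fun A => min 1 ((A \ I).card)) := polyM_g I
  have hEI : (l.toFinset \ I).Nonempty := Finset.sdiff_nonempty.mpr
    (fun h => hne (Finset.Subset.antisymm hIE h))
  have hpbne : (pbases (fun A => min 1 ((A \ I).card)) l.toFinset).Nonempty :=
    pbases_nonempty hg _
  have hgm := greedy_lov hg (fun a => f (Pi.single a (1:ℝ))) l hnd hsort hpbne
  have hpb : pbases (fun A => min 1 ((A \ I).card)) l.toFinset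
      = (l.toFinset \ I).image (fun j => ({j} : Finset α)) := pbases_g hIE hne
  have h1 : (pbases (fun A => min 1 ((A \ I).card)) l.toFinset).sup' hpbne
        (fun B => ∑ b ∈ B, f (Pi.single b (1:ℝ)))
      = ((l.toFinset \ I).image (fun j => ({j} : Finset α))).sup' (hpb ▸ hpbne)
        (fun B => ∑ b ∈ B, f (Pi.single b (1:ℝ))) :=
    Finset.sup'_congr hpbne hpb (fun _ _ => rfl)
  have h2 : ((l.toFinset \ I).image (fun j => ({j} : Finset α))).sup' (hpb ▸ hpbne)
        (fun B => ∑ b ∈ B, f (Pi.single b (1:ℝ)))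
      = (l.toFinset \ I).sup' hEI (fun j => f (Pi.single j (1:ℝ))) := by
    rw [Finset.sup'_image]
    apply Finset.sup'_congr hEI rfl
    intro j _
    simp
  have h3 : mymax f (Tset l.toFinset I)
      = (l.toFinset \ I).sup' hEI (fun j => f (Pi.single j (1:ℝ))) := by
    rw [Tset, mymax_of_nonempty (hEI.image _)]
    rw [Finset.sup'_image (hEI.image _) (⇑f)]
    exact Finset.sup'_congr hEI rfl (fun j _ => rfl)
  rw [h3, ← h2, ← h1, hgm]

lemma pref_subset (l : List α) (k : ℕ) : pref l k ⊆ l.toFinset := by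
  intro x hx
  rw [pref, List.mem_toFinset] at hx
  exact List.mem_toFinset.mpr (List.take_subset k l hx)

lemma lov_sum_eq (r : Finset α → ℕ)
    (hcard : ∀ A, r A ≤ A.card)
    (hmono : ∀ A B, A ⊆ B → r A ≤ r B)
    (w : α → ℝ) (l : List α) :
    ∑ i ∈ Finset.Icc 1 (r l.toFinset), lov w l (fun A => min i (r A))
      = ∑ I ∈ l.toFinset.powerset.filter (fun I => ¬ I = l.toFinset),
          ((gammaT (l.toFinset \ I) (contr r I) : ℤ) : ℝ)
            * lov w l (fun A => min 1 ((A \ I).card)) := by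
  unfold lov
  rw [Finset.sum_comm]
  have hR : ∑ I ∈ l.toFinset.powerset.filter (fun I => ¬ I = l.toFinset),
        ((gammaT (l.toFinset \ I) (contr r I) : ℤ) : ℝ)
          * ∑ j ∈ Finset.range l.length,
              wt w l j * (((min 1 ((pref l (j+1) \ I).card) : ℕ) : ℝ)
                - ((min 1 ((pref l j \ I).card) : ℕ) : ℝ))
      = ∑ j ∈ Finset.range l.length,
          ∑ I ∈ l.toFinset.powerset.filter (fun I => ¬ I = l.toFinset),
            ((gammaT (l.toFinset \ I) (contr r I) : ℤ) : ℝ)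
              * (wt w l j * (((min 1 ((pref l (j+1) \ I).card) : ℕ) : ℝ)
                - ((min 1 ((pref l j \ I).card) : ℕ) : ℝ))) := by
    rw [← Finset.sum_comm]
    apply Finset.sum_congr rfl
    intro I _
    rw [Finset.mul_sum]
  rw [hR]
  apply Finset.sum_congr rfl
  intro j hj
  have hS0 := PhiPsi l.toFinset r hcard hmono (pref_subset l j)
  have hS1 := PhiPsi l.toFinset r hcard hmono (pref_subset l (j+1))
  have hL : ∑ i ∈ Finset.Icc 1 (r l.toFinset),
        wt w l j * (((min i (r (pref l (j+1))) : ℕ) : ℝ) - ((min i (r (pref l j)) : ℕ) : ℝ))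
      = wt w l j * ((∑ i ∈ Finset.Icc 1 (r l.toFinset), ((min i (r (pref l (j+1))) : ℕ) : ℝ))
          - (∑ i ∈ Finset.Icc 1 (r l.toFinset), ((min i (r (pref l j)) : ℕ) : ℝ))) := by
    rw [← Finset.mul_sum, Finset.sum_sub_distrib]
  have hRR : ∑ I ∈ l.toFinset.powerset.filter (fun I => ¬ I = l.toFinset),
        ((gammaT (l.toFinset \ I) (contr r I) : ℤ) : ℝ)
          * (wt w l j * (((min 1 ((pref l (j+1) \ I).card) : ℕ) : ℝ)
            - ((min 1 ((pref l j \ I).card) : ℕ) : ℝ)))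
      = wt w l j * ((∑ I ∈ l.toFinset.powerset.filter (fun I => ¬ I = l.toFinset),
            ((gammaT (l.toFinset \ I) (contr r I) : ℤ) : ℝ)
              * ((min 1 ((pref l (j+1) \ I).card) : ℕ) : ℝ))
          - (∑ I ∈ l.toFinset.powerset.filter (fun I => ¬ I = l.toFinset),
            ((gammaT (l.toFinset \ I) (contr r I) : ℤ) : ℝ)
              * ((min 1 ((pref l j \ I).card) : ℕ) : ℝ))) := by
    rw [mul_sub, Finset.mul_sum, Finset.mul_sum, ← Finset.sum_sub_distrib]
    apply Finset.sum_congr rfl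
    intro I _
    ring
  rw [hL, hRR, hS0, hS1]


lemma key_scalar (E : Finset α) (r : Finset α → ℕ)
    (hcard : ∀ A, r A ≤ A.card)
    (hmono : ∀ A B, A ⊆ B → r A ≤ r B)
    (hsub : ∀ A B, r (A ∪ B) + r (A ∩ B) ≤ r A + r B)
    (f : V α →L[ℝ] ℝ) :
    ∑ i ∈ Finset.Icc 1 (r E), mymax f (Vset r E i)
      + ∑ I ∈ E.powerset.filter
          (fun I => I ≠ E ∧ gammaT (E \ I) (contr r I) < 0),
          mymax f ((-(gammaT (E \ I) (contr r I) : ℝ)) • Tset E I)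
    = ∑ I ∈ E.powerset.filter
          (fun I => I ≠ E ∧ 0 ≤ gammaT (E \ I) (contr r I)),
          mymax f (((gammaT (E \ I) (contr r I) : ℝ)) • Tset E I) := by
  obtain ⟨l, hnd, hlE, hsort⟩ := exists_sorted E (fun a => f (Pi.single a (1:ℝ)))
  subst hlE
  set w : α → ℝ := fun a => f (Pi.single a (1:ℝ)) with hw
  -- rewrite the three sums into `lov` form
  have e1 : ∑ i ∈ Finset.Icc 1 (r l.toFinset), mymax f (Vset r l.toFinset i)
      = ∑ i ∈ Finset.Icc 1 (r l.toFinset), lov w l (fun A => min i (r A)) :=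
    Finset.sum_congr rfl (fun i _ => mymax_Vset r hcard hmono hsub i f l hnd hsort)
  have e2 : ∑ I ∈ l.toFinset.powerset.filter
        (fun I => I ≠ l.toFinset ∧ gammaT (l.toFinset \ I) (contr r I) < 0),
        mymax f ((-(gammaT (l.toFinset \ I) (contr r I) : ℝ)) • Tset l.toFinset I)
      = ∑ I ∈ l.toFinset.powerset.filter
          (fun I => I ≠ l.toFinset ∧ gammaT (l.toFinset \ I) (contr r I) < 0),
          (-(gammaT (l.toFinset \ I) (contr r I) : ℝ))
            * lov w l (fun A => min 1 ((A \ I).card)) := by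
    apply Finset.sum_congr rfl
    intro I hI
    rw [Finset.mem_filter, Finset.mem_powerset] at hI
    obtain ⟨hIE, hne, hneg⟩ := hI
    have hc : (0:ℝ) ≤ -(gammaT (l.toFinset \ I) (contr r I) : ℝ) := by
      have : (gammaT (l.toFinset \ I) (contr r I) : ℝ) < 0 := by exact_mod_cast hneg
      linarith
    rw [mymax_smul f hc (Tset_nonempty hIE hne), mymax_Tset f l hnd hsort hIE hne]
  have e3 : ∑ I ∈ l.toFinset.powerset.filter
        (fun I => I ≠ l.toFinset ∧ 0 ≤ gammaT (l.toFinset \ I) (contr r I)),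
        mymax f (((gammaT (l.toFinset \ I) (contr r I) : ℝ)) • Tset l.toFinset I)
      = ∑ I ∈ l.toFinset.powerset.filter
          (fun I => I ≠ l.toFinset ∧ 0 ≤ gammaT (l.toFinset \ I) (contr r I)),
          ((gammaT (l.toFinset \ I) (contr r I) : ℝ))
            * lov w l (fun A => min 1 ((A \ I).card)) := by
    apply Finset.sum_congr rfl
    intro I hI
    rw [Finset.mem_filter, Finset.mem_powerset] at hI
    obtain ⟨hIE, hne, hpos⟩ := hI
    have hc : (0:ℝ) ≤ (gammaT (l.toFinset \ I) (contr r I) : ℝ) := by exact_mod_cast hpos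
    rw [mymax_smul f hc (Tset_nonempty hIE hne), mymax_Tset f l hnd hsort hIE hne]
  rw [e1, e2, e3]
  -- the core identity
  have hmid := lov_sum_eq r hcard hmono w l
  -- split the full filtered sum by sign
  set allF := l.toFinset.powerset.filter (fun I => ¬ I = l.toFinset) with hallF
  set g : Finset α → ℝ := fun I => ((gammaT (l.toFinset \ I) (contr r I) : ℤ) : ℝ)
      * lov w l (fun A => min 1 ((A \ I).card)) with hg
  have hposF : l.toFinset.powerset.filter
        (fun I => I ≠ l.toFinset ∧ 0 ≤ gammaT (l.toFinset \ I) (contr r I))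
      = allF.filter (fun I => 0 ≤ gammaT (l.toFinset \ I) (contr r I)) := by
    rw [hallF, Finset.filter_filter]
  have hnegF : l.toFinset.powerset.filter
        (fun I => I ≠ l.toFinset ∧ gammaT (l.toFinset \ I) (contr r I) < 0)
      = allF.filter (fun I => ¬ 0 ≤ gammaT (l.toFinset \ I) (contr r I)) := by
    rw [hallF, Finset.filter_filter]
    apply Finset.filter_congr
    intro I _
    simp [not_le]
  have hsplit : ∑ I ∈ allF.filter (fun I => 0 ≤ gammaT (l.toFinset \ I) (contr r I)), g I
      + ∑ I ∈ allF.filter (fun I => ¬ 0 ≤ gammaT (l.toFinset \ I) (contr r I)), g I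
      = ∑ I ∈ allF, g I :=
    Finset.sum_filter_add_sum_filter_not allF _ g
  have hnegsum : ∑ I ∈ allF.filter (fun I => ¬ 0 ≤ gammaT (l.toFinset \ I) (contr r I)),
        (-(gammaT (l.toFinset \ I) (contr r I) : ℝ))
          * lov w l (fun A => min 1 ((A \ I).card))
      = - ∑ I ∈ allF.filter (fun I => ¬ 0 ≤ gammaT (l.toFinset \ I) (contr r I)), g I := by
    rw [← Finset.sum_neg_distrib]
    apply Finset.sum_congr rfl
    intro I _
    rw [hg]
    push_cast
    ring
  rw [hposF, hnegF, hnegsum, hmid]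
  have : ∑ I ∈ allF, g I = ∑ I ∈ allF,
      ((gammaT (l.toFinset \ I) (contr r I) : ℤ) : ℝ)
        * lov w l (fun A => min 1 ((A \ I).card)) := rfl
  rw [← this] at *
  linarith [hsplit]


lemma matroidPolytope_eq (E : Finset α) (r : Finset α → ℕ) (i : ℕ) :
    matroidPolytope E (fun A => min i (r A)) = convexHull ℝ (↑(Vset r E i) : Set (V α)) := by
  rw [matroidPolytope]
  congr 1
  ext x
  simp only [Set.mem_setOf_eq, Vset, Finset.coe_image, Set.mem_image, Finset.mem_coe,
    mem_pbases]
  constructor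
  · rintro ⟨B, h1, h2, h3, rfl⟩; exact ⟨B, ⟨h1, h2, h3⟩, rfl⟩
  · rintro ⟨B, ⟨h1, h2, h3⟩, rfl⟩; exact ⟨B, h1, h2, h3, rfl⟩

lemma simplexFace_smul_eq (E I : Finset α) (c : ℝ) :
    c • simplexFace (E \ I) = convexHull ℝ (↑(c • Tset E I) : Set (V α)) := by
  rw [simplexFace]
  have hset : {x : V α | ∃ i ∈ E \ I, x = Pi.single i (1:ℝ)} = (↑(Tset E I) : Set (V α)) := by
    ext x
    simp only [Set.mem_setOf_eq, Tset, Finset.coe_image, Set.mem_image, Finset.mem_coe]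
    constructor
    · rintro ⟨i, hi, rfl⟩; exact ⟨i, hi, rfl⟩
    · rintro ⟨i, hi, rfl⟩; exact ⟨i, hi, rfl⟩
  rw [hset, Finset.coe_smul_finset, convexHull_smul]

end TFS

theorem truncation_flag_signed_sum {α : Type*} [DecidableEq α]
    (E : Finset α) (r : Finset α → ℕ)
    (hcard : ∀ A, r A ≤ A.card)
    (hmono : ∀ A B, A ⊆ B → r A ≤ r B)
    (hsub : ∀ A B, r (A ∪ B) + r (A ∩ B) ≤ r A + r B)
    (hE : ∀ A, r (A ∩ E) = r A) :
    (∑ i ∈ Finset.Icc 1 (r E), matroidPolytope E (fun A => min i (r A))) +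
        ∑ I ∈ E.powerset.filter
            (fun I => I ≠ E ∧ gammaT (E \ I) (contr r I) < 0),
          (-(gammaT (E \ I) (contr r I) : ℝ)) • simplexFace (E \ I)
      = ∑ I ∈ E.powerset.filter
            (fun I => I ≠ E ∧ 0 ≤ gammaT (E \ I) (contr r I)),
          ((gammaT (E \ I) (contr r I) : ℝ)) • simplexFace (E \ I) := by
  classical
  have e1 : (∑ i ∈ Finset.Icc 1 (r E), matroidPolytope E (fun A => min i (r A)))
      = convexHull ℝ (↑(∑ i ∈ Finset.Icc 1 (r E), TFS.Vset r E i) : Set (TFS.V α)) := by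
    rw [Finset.sum_congr rfl (fun i _ => TFS.matroidPolytope_eq E r i)]
    exact TFS.hull_finsetSum _ _
  have e2 : (∑ I ∈ E.powerset.filter
        (fun I => I ≠ E ∧ gammaT (E \ I) (contr r I) < 0),
        (-(gammaT (E \ I) (contr r I) : ℝ)) • simplexFace (E \ I))
      = convexHull ℝ (↑(∑ I ∈ E.powerset.filter
          (fun I => I ≠ E ∧ gammaT (E \ I) (contr r I) < 0),
          (-(gammaT (E \ I) (contr r I) : ℝ)) • TFS.Tset E I) : Set (TFS.V α)) := by
    rw [Finset.sum_congr rfl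
      (fun I _ => TFS.simplexFace_smul_eq E I (-(gammaT (E \ I) (contr r I) : ℝ)))]
    exact TFS.hull_finsetSum _ _
  have e3 : (∑ I ∈ E.powerset.filter
        (fun I => I ≠ E ∧ 0 ≤ gammaT (E \ I) (contr r I)),
        ((gammaT (E \ I) (contr r I) : ℝ)) • simplexFace (E \ I))
      = convexHull ℝ (↑(∑ I ∈ E.powerset.filter
          (fun I => I ≠ E ∧ 0 ≤ gammaT (E \ I) (contr r I)),
          ((gammaT (E \ I) (contr r I) : ℝ)) • TFS.Tset E I) : Set (TFS.V α)) := by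
    rw [Finset.sum_congr rfl
      (fun I _ => TFS.simplexFace_smul_eq E I ((gammaT (E \ I) (contr r I) : ℝ)))]
    exact TFS.hull_finsetSum _ _
  rw [e1, e2, e3, ← convexHull_add, ← Finset.coe_add]
  -- nonemptiness
  have hVne : ∀ i ∈ Finset.Icc 1 (r E), (TFS.Vset r E i).Nonempty :=
    fun i _ => TFS.Vset_nonempty r hcard hmono hsub E i
  have hTne : ∀ (c : Finset α → ℝ) (I : Finset α),
      I ∈ E.powerset.filter (fun I => I ≠ E ∧ gammaT (E \ I) (contr r I) < 0) ∨
      I ∈ E.powerset.filter (fun I => I ≠ E ∧ 0 ≤ gammaT (E \ I) (contr r I)) →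
      ((c I) • TFS.Tset E I).Nonempty := by
    intro c I hI
    have h : I ⊆ E ∧ I ≠ E := by
      rcases hI with hI | hI <;>
        (rw [Finset.mem_filter, Finset.mem_powerset] at hI; exact ⟨hI.1, hI.2.1⟩)
    exact (TFS.Tset_nonempty h.1 h.2).smul_finset (a := c I)
  have hP : (∑ i ∈ Finset.Icc 1 (r E), TFS.Vset r E i).Nonempty :=
    TFS.nonempty_finsetSum _ _ hVne
  have hN : (∑ I ∈ E.powerset.filter
      (fun I => I ≠ E ∧ gammaT (E \ I) (contr r I) < 0),
      (-(gammaT (E \ I) (contr r I) : ℝ)) • TFS.Tset E I).Nonempty :=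
    TFS.nonempty_finsetSum _ _
      (fun I hI => hTne (fun I => -(gammaT (E \ I) (contr r I) : ℝ)) I (Or.inl hI))
  have hQ : (∑ I ∈ E.powerset.filter
      (fun I => I ≠ E ∧ 0 ≤ gammaT (E \ I) (contr r I)),
      ((gammaT (E \ I) (contr r I) : ℝ)) • TFS.Tset E I).Nonempty :=
    TFS.nonempty_finsetSum _ _
      (fun I hI => hTne (fun I => ((gammaT (E \ I) (contr r I) : ℝ))) I (Or.inr hI))
  apply TFS.hull_eq_of_mymax_eq (hP.add hN) hQ
  intro f
  rw [TFS.mymax_add f hP hN,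
    TFS.mymax_finsetSum f _ _ hVne,
    TFS.mymax_finsetSum f _ _
      (fun I hI => hTne (fun I => -(gammaT (E \ I) (contr r I) : ℝ)) I (Or.inl hI)),
    TFS.mymax_finsetSum f _ _
      (fun I hI => hTne (fun I => ((gammaT (E \ I) (contr r I) : ℝ))) I (Or.inr hI))]
  exact TFS.key_scalar E r hcard hmono hsub f
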